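/- For θ > 0, let σ_θ(t) = exp(−θ/(1−t²)) on (−1,1), extended by 0 outside, C_θ = (∫_{−1}^{1} σ_θ)^{−1}, and for ω > 0 define H_{ω,θ}(z) = C_θ ∫_{−1}^{1} σ_θ(t) e^{−iωtz} dt. Then for every real x, H_{ω,θ}(ix) ≥ exp(ω|x|/(2√(θ+1))) / (11√(θ+1)). -/

import Mathlib

open MeasureTheory


/-- The bump function `σ_θ(t) = exp(-θ/(1-t²))` on `(-1,1)`, extended by `0`. -/
noncomputable def sigmaBump (θ t : ℝ) : ℝ :=
  if t ∈ Set.Ioo (-1 : ℝ) 1 then Real.exp (-θ / (1 - t ^ 2)) else 0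

/-- The normalizing constant `C_θ = (∫_{-1}^1 σ_θ)⁻¹`. -/
noncomputable def bumpConst (θ : ℝ) : ℝ := (∫ t in (-1 : ℝ)..1, sigmaBump θ t)⁻¹

/-- The entire function `H_{ω,θ}(z) = C_θ ∫_{-1}^1 σ_θ(t) e^{-iωtz} dt`. -/
noncomputable def Hfun (ω θ : ℝ) (z : ℂ) : ℂ :=
  (bumpConst θ : ℂ) * ∫ t in (-1 : ℝ)..1, (sigmaBump θ t : ℂ) * Complex.exp (-Complex.I * ω * t * z)


lemma sigma_nonneg (θ t : ℝ) : 0 ≤ sigmaBump θ t := by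
  unfold sigmaBump; split
  · exact (Real.exp_pos _).le
  · exact le_refl 0

lemma sigma_le (θ : ℝ) (hθ : 0 ≤ θ) (t : ℝ) : sigmaBump θ t ≤ Real.exp (-θ) := by
  unfold sigmaBump; split
  case isTrue h =>
    obtain ⟨h1, h2⟩ := h
    have h3 : 0 < 1 - t ^ 2 := by nlinarith
    apply Real.exp_le_exp.mpr
    rw [neg_div, neg_le_neg_iff, le_div_iff₀ h3]
    nlinarith
  case isFalse => exact (Real.exp_pos _).le

lemma sigma_meas (θ : ℝ) : Measurable (sigmaBump θ) := by
  unfold sigmaBump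
  apply Measurable.ite measurableSet_Ioo _ measurable_const
  apply Measurable.exp
  exact (measurable_const.div ((measurable_const.sub (measurable_id.pow_const 2))))

lemma sigma_even (θ t : ℝ) : sigmaBump θ (-t) = sigmaBump θ t := by
  unfold sigmaBump
  have h : (-t ∈ Set.Ioo (-1:ℝ) 1) ↔ (t ∈ Set.Ioo (-1:ℝ) 1) := by
    simp only [Set.mem_Ioo]
    constructor <;> (rintro ⟨h1, h2⟩; constructor <;> linarith)
  rw [show ((-t : ℝ) ^ 2) = t ^ 2 by ring, if_congr h rfl rfl]

lemma sigma_intInt (θ c a b : ℝ) (hθ : 0 ≤ θ) :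
    IntervalIntegrable (fun t => sigmaBump θ t * Real.exp (c * t)) MeasureTheory.volume a b := by
  have hg : IntervalIntegrable (fun t => Real.exp (-θ) * Real.exp (c * t))
      MeasureTheory.volume a b :=
    (continuous_const.mul (Real.continuous_exp.comp (continuous_const.mul continuous_id))).intervalIntegrable a b
  apply hg.mono_fun ((sigma_meas θ).mul (by fun_prop)).aestronglyMeasurable
  filter_upwards with t
  simp only [Pi.mul_apply]
  rw [Real.norm_eq_abs, Real.norm_eq_abs,
    abs_of_nonneg (mul_nonneg (sigma_nonneg _ _) (Real.exp_pos _).le),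
    abs_of_nonneg (mul_nonneg (Real.exp_pos _).le (Real.exp_pos _).le)]
  exact mul_le_mul_of_nonneg_right (sigma_le θ hθ t) (Real.exp_pos _).le

lemma sigma_intInt' (θ a b : ℝ) (hθ : 0 ≤ θ) :
    IntervalIntegrable (sigmaBump θ) MeasureTheory.volume a b := by
  have h := sigma_intInt θ 0 a b hθ
  simpa using h

lemma sigma_integral_lower (θ c : ℝ) (hθ : 0 < θ) (hc : 0 ≤ c) :
    Real.exp (-(θ + 1)) * Real.exp (c / (2 * Real.sqrt (θ + 1))) / (2 * Real.sqrt (θ + 1)) ≤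
    ∫ t in (-1 : ℝ)..1, sigmaBump θ t * Real.exp (c * t) := by
  set s := Real.sqrt (θ + 1) with hs
  have hs0 : 0 < s := Real.sqrt_pos.mpr (by linarith)
  have hss : s ^ 2 = θ + 1 := Real.sq_sqrt (by linarith)
  have hs1 : 1 < s := by nlinarith
  set a := 1 / (2 * s) with ha
  set b := 1 / s with hb
  have ha0 : 0 < a := by positivity
  have hab : a < b := by
    rw [ha, hb]
    rw [div_lt_div_iff₀ (by positivity) (by positivity)]
    nlinarith
  have hb1 : b < 1 := by rw [hb, div_lt_one hs0]; exact hs1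
  have hm1a : (-1 : ℝ) ≤ a := by linarith
  have hb1' : b ≤ 1 := hb1.le
  set f := fun t => sigmaBump θ t * Real.exp (c * t) with hf
  have hint : ∀ u v : ℝ, IntervalIntegrable f volume u v := fun u v =>
    sigma_intInt θ c u v hθ.le
  have hnn : ∀ t : ℝ, 0 ≤ f t := fun t =>
    mul_nonneg (sigma_nonneg _ _) (Real.exp_pos _).le
  have hsplit2 : (∫ t in a..b, f t) + ∫ t in b..1, f t = ∫ t in a..(1:ℝ), f t :=
    intervalIntegral.integral_add_adjacent_intervals (hint a b) (hint b 1)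
  have hsplit1 : (∫ t in (-1:ℝ)..a, f t) + ∫ t in a..(1:ℝ), f t = ∫ t in (-1:ℝ)..1, f t :=
    intervalIntegral.integral_add_adjacent_intervals (hint (-1) a) (hint a 1)
  have h1 : 0 ≤ ∫ t in (-1:ℝ)..a, f t :=
    intervalIntegral.integral_nonneg hm1a (fun t _ => hnn t)
  have h3 : 0 ≤ ∫ t in b..(1:ℝ), f t :=
    intervalIntegral.integral_nonneg hb1' (fun t _ => hnn t)
  -- middle lower bound
  have hpoint : ∀ t ∈ Set.Icc a b,
      Real.exp (-(θ + 1)) * Real.exp (c * a) ≤ f t := by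
    rintro t ⟨hta, htb⟩
    have ht0 : 0 < t := lt_of_lt_of_le ha0 hta
    have ht1 : t < 1 := lt_of_le_of_lt htb hb1
    have hmem : t ∈ Set.Ioo (-1:ℝ) 1 := ⟨by linarith, ht1⟩
    have h1t : 0 < 1 - t ^ 2 := by nlinarith
    have htb2 : t ^ 2 ≤ 1 / (θ + 1) := by
      have h' : t ^ 2 ≤ b ^ 2 := by nlinarith
      rwa [hb, div_pow, one_pow, hss] at h'
    have hexp1 : Real.exp (-(θ + 1)) ≤ Real.exp (-θ / (1 - t ^ 2)) := by
      apply Real.exp_le_exp.mpr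
      rw [neg_div, neg_le_neg_iff, div_le_iff₀ h1t]
      have hcc : (θ + 1) * (1 / (θ + 1)) = 1 := by field_simp
      nlinarith [mul_le_mul_of_nonneg_left htb2 (show (0:ℝ) ≤ θ + 1 by linarith)]
    have hexp2 : Real.exp (c * a) ≤ Real.exp (c * t) :=
      Real.exp_le_exp.mpr (mul_le_mul_of_nonneg_left hta hc)
    have : f t = Real.exp (-θ / (1 - t ^ 2)) * Real.exp (c * t) := by
      rw [hf]; simp only [sigmaBump, if_pos hmem]
    rw [this]
    exact mul_le_mul hexp1 hexp2 (Real.exp_pos _).le (Real.exp_pos _).le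
  have h2 : (b - a) * (Real.exp (-(θ + 1)) * Real.exp (c * a)) ≤ ∫ t in a..b, f t := by
    have := intervalIntegral.integral_mono_on hab.le
      (intervalIntegrable_const) (hint a b) hpoint
    rwa [intervalIntegral.integral_const, smul_eq_mul] at this
  have hba : b - a = a := by rw [ha, hb]; field_simp; ring
  have hca : c * a = c / (2 * s) := by rw [ha]; field_simp
  calc Real.exp (-(θ + 1)) * Real.exp (c / (2 * s)) / (2 * s)
      = (b - a) * (Real.exp (-(θ + 1)) * Real.exp (c * a)) := by
        rw [hba, hca, ha]; field_simp
    _ ≤ ∫ t in a..b, f t := h2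
    _ ≤ ∫ t in (-1:ℝ)..1, f t := by linarith

lemma sigma_integral_upper (θ : ℝ) (hθ : 0 ≤ θ) :
    ∫ t in (-1 : ℝ)..1, sigmaBump θ t ≤ 2 * Real.exp (-θ) := by
  have h := intervalIntegral.integral_mono_on (by norm_num : (-1:ℝ) ≤ 1)
    (sigma_intInt' θ (-1) 1 hθ) (intervalIntegrable_const (c := Real.exp (-θ)))
    (fun t _ => sigma_le θ hθ t)
  rwa [intervalIntegral.integral_const, smul_eq_mul, show ((1:ℝ) - (-1)) = 2 by norm_num] at h

lemma sigma_integral_even (θ c : ℝ) :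
    (∫ t in (-1 : ℝ)..1, sigmaBump θ t * Real.exp (c * t)) =
    ∫ t in (-1 : ℝ)..1, sigmaBump θ t * Real.exp (-c * t) := by
  have h := intervalIntegral.integral_comp_neg (a := (-1:ℝ)) (b := 1)
    (f := fun t => sigmaBump θ t * Real.exp (c * t))
  simp only [neg_neg] at h
  rw [← h]
  apply intervalIntegral.integral_congr
  intro t _
  simp only [sigma_even, mul_neg, neg_mul]


lemma Hfun_re (ω θ x : ℝ) :
    (Hfun ω θ (Complex.I * x)).re =
      bumpConst θ * ∫ t in (-1 : ℝ)..1, sigmaBump θ t * Real.exp ((ω * x) * t) := by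
  unfold Hfun
  have h : ∀ t : ℝ, (sigmaBump θ t : ℂ) * Complex.exp (-Complex.I * ω * t * (Complex.I * x)) =
      ((sigmaBump θ t * Real.exp ((ω * x) * t) : ℝ) : ℂ) := by
    intro t
    have harg : -Complex.I * (ω:ℂ) * (t:ℂ) * (Complex.I * (x:ℂ)) = (((ω * x) * t : ℝ) : ℂ) := by
      push_cast
      rw [show -Complex.I * (ω:ℂ) * (t:ℂ) * (Complex.I * (x:ℂ)) =
        -(Complex.I * Complex.I) * ((ω:ℂ) * (x:ℂ) * (t:ℂ)) by ring, Complex.I_mul_I]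
      ring
    rw [harg, ← Complex.ofReal_exp, ← Complex.ofReal_mul]
  simp only [h]
  rw [intervalIntegral.integral_ofReal, ← Complex.ofReal_mul, Complex.ofReal_re]


/-- For every real `x`, `H_{ω,θ}(ix) ≥ exp(ω|x|/(2√(θ+1)))/(11√(θ+1))`. -/
theorem Hfun_lower_bound (ω θ : ℝ) (hω : 0 < ω) (hθ : 0 < θ) (x : ℝ) :
    Real.exp (ω * |x| / (2 * Real.sqrt (θ + 1))) / (11 * Real.sqrt (θ + 1)) ≤
      (Hfun ω θ (Complex.I * x)).re := by
  rw [Hfun_re]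
  set c := ω * x with hc
  have hcabs : |c| = ω * |x| := by rw [hc, abs_mul, abs_of_pos hω]
  set s := Real.sqrt (θ + 1) with hs
  have hs0 : 0 < s := Real.sqrt_pos.mpr (by linarith)
  -- rewrite the integral with |c|
  have heq : (∫ t in (-1 : ℝ)..1, sigmaBump θ t * Real.exp (c * t)) =
      ∫ t in (-1 : ℝ)..1, sigmaBump θ t * Real.exp (|c| * t) := by
    rcases abs_cases c with ⟨h1, _⟩ | ⟨h1, _⟩
    · rw [h1]
    · rw [h1, ← sigma_integral_even]
  rw [heq]
  -- bounds
  have hI := sigma_integral_lower θ |c| hθ (abs_nonneg c)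
  have hIpos : 0 < Real.exp (-(θ + 1)) * Real.exp (|c| / (2 * s)) / (2 * s) := by positivity
  have hC : Real.exp θ / 2 ≤ bumpConst θ := by
    unfold bumpConst
    have hub := sigma_integral_upper θ hθ.le
    have hlb : 0 < ∫ t in (-1 : ℝ)..1, sigmaBump θ t := by
      have h0 := sigma_integral_lower θ 0 hθ (le_refl 0)
      simp only [zero_mul, Real.exp_zero, mul_one, zero_div] at h0
      refine lt_of_lt_of_le ?_ (le_trans h0 ?_)
      · positivity
      · apply le_of_eq; apply intervalIntegral.integral_congr
        intro t _; simp
    rw [show Real.exp θ / 2 = (2 * Real.exp (-θ))⁻¹ by rw [Real.exp_neg]; field_simp]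
    exact inv_anti₀ hlb hub
  have hCpos : 0 < bumpConst θ := lt_of_lt_of_le (by positivity) hC
  set E := Real.exp (|c| / (2 * s)) with hE
  have hEpos : 0 < E := Real.exp_pos _
  have hstep : Real.exp θ / 2 * (Real.exp (-(θ + 1)) * E / (2 * s)) ≤
      bumpConst θ * ∫ t in (-1 : ℝ)..1, sigmaBump θ t * Real.exp (|c| * t) :=
    mul_le_mul hC hI hIpos.le hCpos.le
  have hexpcomb : Real.exp θ * Real.exp (-(θ + 1)) = Real.exp (-1) := by
    rw [← Real.exp_add]; norm_num
  have harith : E / (11 * s) ≤ Real.exp θ / 2 * (Real.exp (-(θ + 1)) * E / (2 * s)) := by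
    have hkey : Real.exp θ / 2 * (Real.exp (-(θ + 1)) * E / (2 * s)) =
        Real.exp (-1) * E / (4 * s) := by
      rw [← hexpcomb]; field_simp; ring
    rw [hkey]
    have h1 : Real.exp 1 ≤ 2.72 := by
      have := Real.exp_one_lt_d9; linarith
    have h2 : (2.72 : ℝ)⁻¹ ≤ Real.exp (-1) := by
      rw [Real.exp_neg]
      exact inv_anti₀ (Real.exp_pos 1) h1
    have h3 : (4 : ℝ) ≤ 11 * Real.exp (-1) := by nlinarith
    rw [div_le_div_iff₀ (by positivity) (by positivity)]
    nlinarith [mul_pos hEpos hs0]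
  have hfinal : Real.exp (ω * |x| / (2 * s)) = E := by rw [hE, hcabs]
  rw [hfinal] at *
  linarith
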